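/- Edge-disjoint path pairs to two target vertices in 3-connected graphs (Remark 4.12, claims (1) and (2)). Let G be a finite connected simple graph and let s₁, s₂, s₃ ∈ V(G) be three distinct vertices such that G is 3-connected to {s₁,s₂,s₃}. Then: (1) for any two distinct vertices x, y ∈ V(G) ∖ {s₁,s₂,s₃}, there exist two edge-disjoint paths in G, one starting at x and the other starting at y, such that one of them ends at s₁ and the other ends at s₃; (2) for any x ∈ V(G) ∖ {s₂}, there exist two edge-disjoint paths in G, one starting at x and the other starting at s₂, such that one of them ends at s₁ and the other ends at s₃. -/

import Mathlib

open scoped Classical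

/-- A finite multigraph on a vertex type `V`: a finite vertex set together with
an edge-multiplicity function on unordered pairs, supported on pairs of vertices. -/
structure Multigraph (V : Type) where
  verts : Finset V
  mult : Sym2 V → ℕ
  supp : ∀ e : Sym2 V, mult e ≠ 0 → ∀ v ∈ e, v ∈ verts

namespace Multigraph

variable {V : Type}

/-- The multiset of neighbours of `x`, counted with edge multiplicity. -/
def nbrs (G : Multigraph V) (x : V) : Multiset V :=
  G.verts.val.bind fun u => Multiset.replicate (G.mult s(x, u)) u

/-- The (edge-)degree of a vertex: the number of edges incident to it. -/
def deg (G : Multigraph V) (x : V) : ℕ := (G.nbrs x).card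

/-- Adjacency: `a ≠ b` and at least one edge joins `a` and `b`. -/
def Adj (G : Multigraph V) (a b : V) : Prop := a ≠ b ∧ G.mult s(a, b) ≠ 0

/-- A multigraph is simple if all multiplicities are at most one and there
are no self-loops. -/
def IsSimple (G : Multigraph V) : Prop :=
  (∀ e : Sym2 V, G.mult e ≤ 1) ∧ ∀ v : V, G.mult s(v, v) = 0

/-- Connectivity of a multigraph. -/
def Connected (G : Multigraph V) : Prop :=
  G.verts.Nonempty ∧ ∀ u ∈ G.verts, ∀ v ∈ G.verts, Relation.ReflTransGen G.Adj u v

/-- The number of edges (counted with multiplicity). -/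
def numEdges (G : Multigraph V) : ℕ := ∑ e ∈ G.verts.sym2, G.mult e

end Multigraph

/-- The list of (unordered) edges traversed by a list of vertices. -/
def listEdges {V : Type} (l : List V) : List (Sym2 V) :=
  (l.zip l.tail).map fun p => s(p.1, p.2)

namespace Multigraph

variable {V : Type}

/-- `l` is a (simple) path in `G`: a nonempty list of distinct vertices of `G`
in which consecutive vertices are adjacent. -/
def IsPathList (G : Multigraph V) (l : List V) : Prop :=
  l ≠ [] ∧ l.Nodup ∧ (∀ v ∈ l, v ∈ G.verts) ∧ l.Chain' G.Adj

/-- `l` is a simple path in `G` from `a` to `b`. -/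
def IsPathBetween (G : Multigraph V) (a b : V) (l : List V) : Prop :=
  G.IsPathList l ∧ l.head? = some a ∧ l.getLast? = some b

/-- `x` is 3-connected to `{s₁, s₂, s₃}`: there are three pairwise edge-disjoint
paths from `x` to `s₁`, `s₂` and `s₃` respectively. -/
def ThreeConnFrom (G : Multigraph V) (s₁ s₂ s₃ x : V) : Prop :=
  ∃ l₁ l₂ l₃ : List V,
    G.IsPathBetween x s₁ l₁ ∧ G.IsPathBetween x s₂ l₂ ∧ G.IsPathBetween x s₃ l₃ ∧
    (listEdges l₁).Disjoint (listEdges l₂) ∧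
    (listEdges l₁).Disjoint (listEdges l₃) ∧
    (listEdges l₂).Disjoint (listEdges l₃)

/-- `G` is 3-connected to `{s₁, s₂, s₃}`: every vertex outside `{s₁, s₂, s₃}`
is 3-connected to `{s₁, s₂, s₃}`. -/
def ThreeConnTo (G : Multigraph V) (s₁ s₂ s₃ : V) : Prop :=
  ∀ x ∈ G.verts, x ≠ s₁ → x ≠ s₂ → x ≠ s₃ → G.ThreeConnFrom s₁ s₂ s₃ x

/-- The edge `{x, y}` is H-reducible: `x` and `y` both have degree at least 3
and are joined by exactly one edge. -/
def HReducible (G : Multigraph V) (x y : V) : Prop :=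
  x ∈ G.verts ∧ y ∈ G.verts ∧ x ≠ y ∧ G.mult s(x, y) = 1 ∧
    3 ≤ G.deg x ∧ 3 ≤ G.deg y

/-- `G'` is the H-reduction of `G` by the H-reducible edge `{x, y}`:
if `x` (resp. `y`) has degree `3` it is deleted and its two remaining
neighbours get joined by a new edge `e_{x∖y}` (resp. `e_{y∖x}`); a vertex of
degree at least `4` is kept; if both have degree at least `4`, only the edge
`{x, y}` is deleted. -/
def IsHReductionBy (G : Multigraph V) (x y : V) (G' : Multigraph V) : Prop :=
  G.HReducible x y ∧
    ((G.deg x = 3 ∧ G.deg y = 3 ∧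
        ∃ z₁ z₂ t₁ t₂ : V,
          G.nbrs x = {y, z₁, z₂} ∧ G.nbrs y = {x, t₁, t₂} ∧
          (∀ v : V, v ∈ G'.verts ↔ v ∈ G.verts ∧ v ≠ x ∧ v ≠ y) ∧
          ∀ e : Sym2 V, G'.mult e =
            (if x ∈ e ∨ y ∈ e then 0 else G.mult e)
              + (if e = s(z₁, z₂) then 1 else 0)
              + (if e = s(t₁, t₂) then 1 else 0)) ∨
     (G.deg x = 3 ∧ 4 ≤ G.deg y ∧
        ∃ z₁ z₂ : V, G.nbrs x = {y, z₁, z₂} ∧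
          (∀ v : V, v ∈ G'.verts ↔ v ∈ G.verts ∧ v ≠ x) ∧
          ∀ e : Sym2 V, G'.mult e =
            (if x ∈ e then 0 else G.mult e) + (if e = s(z₁, z₂) then 1 else 0)) ∨
     (G.deg y = 3 ∧ 4 ≤ G.deg x ∧
        ∃ t₁ t₂ : V, G.nbrs y = {x, t₁, t₂} ∧
          (∀ v : V, v ∈ G'.verts ↔ v ∈ G.verts ∧ v ≠ y) ∧
          ∀ e : Sym2 V, G'.mult e =
            (if y ∈ e then 0 else G.mult e) + (if e = s(t₁, t₂) then 1 else 0)) ∨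
     (4 ≤ G.deg x ∧ 4 ≤ G.deg y ∧
        (∀ v : V, v ∈ G'.verts ↔ v ∈ G.verts) ∧
        ∀ e : Sym2 V, G'.mult e = if e = s(x, y) then 0 else G.mult e))

end Multigraph

namespace EDPaux
variable {V : Type}

def pairs (l : List V) : List (V × V) := l.zip l.tail

@[simp] lemma pairs_nil : pairs ([] : List V) = [] := rfl
@[simp] lemma pairs_single (a : V) : pairs [a] = [] := rfl
@[simp] lemma pairs_cons₂ (a b : V) (l : List V) :
    pairs (a :: b :: l) = (a, b) :: pairs (b :: l) := rfl

lemma listEdges_eq (l : List V) : listEdges l = (pairs l).map fun p => s(p.1, p.2) := rfl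

lemma mem_pairs_fst {p : V × V} : ∀ {l : List V}, p ∈ pairs l → p.1 ∈ l ∧ p.2 ∈ l
  | [], h => by simp [pairs] at h
  | [a], h => by simp [pairs] at h
  | a :: b :: l, h => by
      rw [pairs_cons₂] at h
      rcases List.mem_cons.1 h with h | h
      · subst h; simp
      · have := mem_pairs_fst (l := b :: l) h
        exact ⟨List.mem_cons_of_mem _ this.1, List.mem_cons_of_mem _ this.2⟩

lemma chain'_iff_pairs {r : V → V → Prop} : ∀ {l : List V},
    l.Chain' r ↔ ∀ p ∈ pairs l, r p.1 p.2
  | [] => by simp [List.Chain']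
  | [a] => by simp [List.Chain']
  | a :: b :: l => by
      rw [show (a :: b :: l).Chain' r ↔ r a b ∧ (b :: l).Chain' r from List.isChain_cons_cons, pairs_cons₂, chain'_iff_pairs (l := b :: l)]
      constructor
      · rintro ⟨h1, h2⟩ p hp
        rcases List.mem_cons.1 hp with rfl | hp
        · exact h1
        · exact h2 p hp
      · intro h
        exact ⟨h (a, b) List.mem_cons_self,
          fun p hp => h p (List.mem_cons_of_mem _ hp)⟩

lemma pairs_nodup : ∀ {l : List V}, l.Nodup → (pairs l).Nodup
  | [], _ => by simp
  | [a], _ => by simp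
  | a :: b :: l, h => by
      rw [pairs_cons₂, List.nodup_cons]
      refine ⟨?_, pairs_nodup (List.Nodup.of_cons h)⟩
      intro hmem
      have := (mem_pairs_fst hmem).1
      exact (List.nodup_cons.1 h).1 this

lemma swap_not_mem_pairs : ∀ {l : List V}, l.Nodup → ∀ {u v : V},
    (u, v) ∈ pairs l → (v, u) ∉ pairs l
  | [], _, u, v, h => by simp [pairs] at h
  | [a], _, u, v, h => by simp [pairs] at h
  | a :: b :: l, hnd, u, v, h => by
      intro hsw
      rw [pairs_cons₂] at h hsw
      have hab : a ∉ b :: l := (List.nodup_cons.1 hnd).1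
      simp only [List.mem_cons, Prod.mk.injEq] at h hsw
      rcases h with ⟨rfl, rfl⟩ | h
      · rcases hsw with ⟨rfl, h2⟩ | hsw
        · exact hab List.mem_cons_self
        · exact hab ((mem_pairs_fst hsw).2)
      · rcases hsw with ⟨rfl, rfl⟩ | hsw
        · exact hab ((mem_pairs_fst h).2)
        · exact swap_not_mem_pairs (List.Nodup.of_cons hnd) h hsw

lemma pairs_sym2_inj {l : List V} (hnd : l.Nodup) {p q : V × V}
    (hp : p ∈ pairs l) (hq : q ∈ pairs l) (h : s(p.1, p.2) = s(q.1, q.2)) : p = q := by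
  rcases Sym2.eq_iff.1 h with ⟨h1, h2⟩ | ⟨h1, h2⟩
  · exact Prod.ext h1 h2
  · exfalso
    have hp' : (q.2, q.1) ∈ pairs l := by
      have : p = (q.2, q.1) := Prod.ext h1 h2
      exact this ▸ hp
    have hq' : (q.1, q.2) ∈ pairs l := by simpa using hq
    exact swap_not_mem_pairs hnd hq' hp'

lemma pairs_suffix : ∀ {l₁ l₂ : List V}, l₁ <:+ l₂ → pairs l₁ <:+ pairs l₂ := by
  intro l₁ l₂ h
  obtain ⟨t, rfl⟩ := h
  induction t with
  | nil => simp
  | cons a t ih =>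
      refine ih.trans ?_
      rcases ht : (t ++ l₁) with _ | ⟨b, r⟩
      · simp [ht, pairs]
      · rw [List.cons_append, ht, pairs_cons₂]
        exact List.suffix_cons (a, b) _

lemma listEdges_subset_of_suffix {l₁ l₂ : List V} (h : l₁ <:+ l₂) :
    listEdges l₁ ⊆ listEdges l₂ := by
  rw [listEdges_eq, listEdges_eq]
  exact fun e he => ((pairs_suffix h).map _).subset he

lemma listEdges_cons {a h : V} {t : List V} (ht : t.head? = some h) :
    listEdges (a :: t) = s(a, h) :: listEdges t := by
  cases t with
  | nil => simp at ht
  | cons b t' => simp at ht; subst ht; rfl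

lemma getLast?_cons_ne {a : V} {l : List V} (h : l ≠ []) :
    (a :: l).getLast? = l.getLast? := by
  cases l with
  | nil => exact absurd rfl h
  | cons b t => simp [List.getLast?_cons_cons]

lemma getLast?_append_cons (a : V) (t' : List V) :
    ∀ st : List V, (st ++ a :: t').getLast? = (a :: t').getLast?
  | [] => rfl
  | b :: st => by
      rw [List.cons_append, getLast?_cons_ne (by simp), getLast?_append_cons a t' st]

lemma dedup_chain {r : V → V → Prop} : ∀ (n : ℕ) (l : List V), l.length ≤ n → l ≠ [] →
    l.Chain' r → ∃ l' : List V, l' ≠ [] ∧ l'.Nodup ∧ l'.Chain' r ∧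
      l'.head? = l.head? ∧ l'.getLast? = l.getLast? ∧ l' ⊆ l ∧
      listEdges l' ⊆ listEdges l := by
  intro n
  induction n with
  | zero =>
      intro l hl hne _
      cases l with
      | nil => exact absurd rfl hne
      | cons a t => exact absurd hl (by simp)
  | succ n ih =>
      intro l hl hne hch
      by_cases hnd : l.Nodup
      · exact ⟨l, hne, hnd, hch, rfl, rfl, fun _ h => h, fun _ h => h⟩
      cases l with
      | nil => exact absurd rfl hne
      | cons a t =>
          by_cases hat : a ∈ t
          · obtain ⟨st, t', rfl⟩ := List.append_of_mem hat
            have hsuf : (a :: t') <:+ (a :: (st ++ a :: t')) :=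
              (List.suffix_append ..).trans (List.suffix_cons _ _)
            have hlen : (a :: t').length ≤ n := by
              simp only [List.length_cons, List.length_append] at hl ⊢
              omega
            obtain ⟨l', h1, h2, h3, h4, h5, h6, h7⟩ :=
              ih (a :: t') hlen (by simp) (hch.suffix hsuf)
            refine ⟨l', h1, h2, h3, ?_, ?_, ?_, ?_⟩
            · rw [h4]; rfl
            · rw [h5, getLast?_cons_ne (l := st ++ a :: t') (by simp), getLast?_append_cons]
            · exact List.Subset.trans h6 hsuf.subset
            · exact List.Subset.trans h7 (listEdges_subset_of_suffix hsuf)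
          · have htne : t ≠ [] := by
              rintro rfl; exact hnd (by simp)
            have hlen : t.length ≤ n := by simp at hl; omega
            obtain ⟨l', h1, h2, h3, h4, h5, h6, h7⟩ :=
              ih t hlen htne (hch.suffix (List.suffix_cons _ _))
            obtain ⟨h0, hl0⟩ : ∃ h0, t.head? = some h0 := by
              cases t with
              | nil => exact absurd rfl htne
              | cons x xs => exact ⟨x, rfl⟩
            have hl0' : l'.head? = some h0 := h4.trans hl0
            refine ⟨a :: l', by simp, ?_, ?_, ?_, ?_, ?_, ?_⟩
            · rw [List.nodup_cons]
              exact ⟨fun hmem => hat (h6 hmem), h2⟩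
            · refine List.isChain_cons.2 ?_
              refine ⟨?_, h3⟩
              intro y hy
              rw [hl0'] at hy
              obtain rfl : h0 = y := by simpa using hy
              exact (List.isChain_cons.1 hch).1 h0 hl0
            · rfl
            · rw [getLast?_cons_ne h1, getLast?_cons_ne htne, h5]
            · intro v hv
              rcases List.mem_cons.1 hv with rfl | hv
              · exact List.mem_cons_self
              · exact List.mem_cons_of_mem _ (h6 hv)
            · rw [listEdges_cons hl0', listEdges_cons hl0]
              intro e he
              rcases List.mem_cons.1 he with rfl | he
              · exact List.mem_cons_self
              · exact List.mem_cons_of_mem _ (h7 he)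

lemma list_of_reflTransGen {r : V → V → Prop} {a b : V} (h : Relation.ReflTransGen r a b) :
    ∃ l : List V, l ≠ [] ∧ l.Chain' r ∧ l.head? = some a ∧ l.getLast? = some b := by
  induction h using Relation.ReflTransGen.head_induction_on with
  | refl => exact ⟨[b], by simp, by simp [List.Chain'], rfl, rfl⟩
  | @head x c hr _ ih =>
      obtain ⟨l, h1, h2, h3, h4⟩ := ih
      refine ⟨x :: l, by simp, ?_, rfl, by rwa [getLast?_cons_ne h1]⟩
      refine List.isChain_cons.2 ?_
      refine ⟨?_, h2⟩
      intro y hy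
      rw [h3] at hy
      obtain rfl : c = y := by simpa using hy
      exact hr

lemma path_of_reflTransGen {r : V → V → Prop} {a b : V} (h : Relation.ReflTransGen r a b) :
    ∃ l : List V, l ≠ [] ∧ l.Nodup ∧ l.Chain' r ∧ l.head? = some a ∧ l.getLast? = some b := by
  obtain ⟨l, h1, h2, h3, h4⟩ := list_of_reflTransGen h
  obtain ⟨l', g1, g2, g3, g4, g5, _, _⟩ := dedup_chain l.length l le_rfl h1 h2
  exact ⟨l', g1, g2, g3, g4.trans h3, g5.trans h4⟩

lemma fwdwalk {r : V → V → Prop} : ∀ (l : List V), l.Chain' r → ∀ {a b : V},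
    l.head? = some a → l.getLast? = some b →
    Relation.ReflTransGen (fun u v => r u v ∧ (u, v) ∈ pairs l) a b
  | [], _, a, b, ha, _ => by simp at ha
  | [c], _, a, b, ha, hb => by
      obtain rfl : c = a := by simpa using ha
      obtain rfl : c = b := by simpa using hb
      exact Relation.ReflTransGen.refl
  | c :: d :: l, hch, a, b, ha, hb => by
      obtain rfl : c = a := by simpa using ha
      replace hch := List.isChain_cons_cons.1 hch
      have hb' : (d :: l).getLast? = some b := by
        rwa [getLast?_cons_ne (by simp)] at hb
      have := fwdwalk (d :: l) hch.2 rfl hb'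
      have step : Relation.ReflTransGen (fun u v => r u v ∧ (u, v) ∈ pairs (c :: d :: l)) d b :=
        Relation.ReflTransGen.mono (fun u v huv => ⟨huv.1, by rw [pairs_cons₂]; exact List.mem_cons_of_mem _ huv.2⟩) _ _ this
      exact Relation.ReflTransGen.head ⟨hch.1, by rw [pairs_cons₂]; exact List.mem_cons_self⟩ step

lemma revwalk : ∀ (l : List V) {u a : V}, u ∈ l → l.head? = some a →
    Relation.ReflTransGen (fun c d => (d, c) ∈ pairs l) u a
  | [], u, a, hu, _ => by simp at hu
  | c :: t, u, a, hu, ha => by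
      obtain rfl : c = a := by simpa using ha
      rcases List.mem_cons.1 hu with rfl | hu
      · exact Relation.ReflTransGen.refl
      · cases t with
        | nil => simp at hu
        | cons d t' =>
            have ih := revwalk (d :: t') hu rfl
            have lift : Relation.ReflTransGen (fun x y => (y, x) ∈ pairs (c :: d :: t')) u d :=
              Relation.ReflTransGen.mono (fun x y hxy => by
                rw [pairs_cons₂]; exact List.mem_cons_of_mem _ hxy) _ _ ih
            exact lift.tail (by rw [pairs_cons₂]; exact List.mem_cons_self)

lemma crossing {r : V → V → Prop} {A : V → Prop} {a b : V}
    (h : Relation.ReflTransGen r a b) (ha : A a) (hb : ¬ A b) :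
    ∃ u v, A u ∧ ¬ A v ∧ r u v := by
  induction h using Relation.ReflTransGen.head_induction_on with
  | refl => exact absurd ha hb
  | @head x c hr _ ih =>
      by_cases hc : A c
      · exact ih hc
      · exact ⟨x, c, ha, hc, hr⟩

noncomputable def outc (F : Multiset (V × V)) (v : V) : ℕ :=
  Multiset.card (F.filter fun p => p.1 = v)
noncomputable def inc (F : Multiset (V × V)) (v : V) : ℕ :=
  Multiset.card (F.filter fun p => p.2 = v)

lemma outc_cons (p : V × V) (F : Multiset (V × V)) (v : V) :
    outc (p ::ₘ F) v = (if v = p.1 then 1 else 0) + outc F v := by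
  unfold outc
  rw [Multiset.filter_cons, Multiset.card_add]
  rcases eq_or_ne v p.1 with h | h <;> simp [h, eq_comm]

lemma inc_cons (p : V × V) (F : Multiset (V × V)) (v : V) :
    inc (p ::ₘ F) v = (if v = p.2 then 1 else 0) + inc F v := by
  unfold inc
  rw [Multiset.filter_cons, Multiset.card_add]
  rcases eq_or_ne v p.2 with h | h <;> simp [h, eq_comm]

lemma outc_add (F G : Multiset (V × V)) (v : V) :
    outc (F + G) v = outc F v + outc G v := by
  unfold outc; rw [Multiset.filter_add, Multiset.card_add]

lemma inc_add (F G : Multiset (V × V)) (v : V) :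
    inc (F + G) v = inc F v + inc G v := by
  unfold inc; rw [Multiset.filter_add, Multiset.card_add]

lemma outc_le {F G : Multiset (V × V)} (h : F ≤ G) (v : V) : outc F v ≤ outc G v :=
  Multiset.card_le_card (Multiset.filter_le_filter _ h)

lemma inc_le {F G : Multiset (V × V)} (h : F ≤ G) (v : V) : inc F v ≤ inc G v :=
  Multiset.card_le_card (Multiset.filter_le_filter _ h)

lemma outc_sub {F G : Multiset (V × V)} (h : G ≤ F) (v : V) :
    outc (F - G) v = outc F v - outc G v := by
  unfold outc
  rw [Multiset.filter_sub, Multiset.card_sub (Multiset.filter_le_filter _ h)]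

lemma inc_sub {F G : Multiset (V × V)} (h : G ≤ F) (v : V) :
    inc (F - G) v = inc F v - inc G v := by
  unfold inc
  rw [Multiset.filter_sub, Multiset.card_sub (Multiset.filter_le_filter _ h)]

@[simp] lemma outc_zero (v : V) : outc (0 : Multiset (V × V)) v = 0 := rfl
@[simp] lemma inc_zero (v : V) : inc (0 : Multiset (V × V)) v = 0 := rfl

lemma outc_map_swap (C : Multiset (V × V)) (v : V) :
    outc (C.map (fun p : V × V => (p.2, p.1))) v = inc C v := by
  unfold outc inc
  rw [Multiset.filter_map, Multiset.card_map]
  congr 1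

lemma inc_map_swap (C : Multiset (V × V)) (v : V) :
    inc (C.map (fun p : V × V => (p.2, p.1))) v = outc C v := by
  unfold outc inc
  rw [Multiset.filter_map, Multiset.card_map]
  congr 1

lemma trail_balance : ∀ (T : List (V × V)) (p₀ pe : V × V),
    T.Chain' (fun p q => p.2 = q.1) → T.head? = some p₀ → T.getLast? = some pe →
    ∀ v, outc (↑T) v + (if v = pe.2 then 1 else 0)
        = inc (↑T) v + (if v = p₀.1 then 1 else 0)
  | [], p₀, pe, _, h, _, _ => by simp at h
  | [p], p₀, pe, _, h1, h2, v => by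
      obtain rfl : p = p₀ := by simpa using h1
      obtain rfl : p = pe := by simpa using h2
      rw [show ((↑[p] : Multiset (V × V))) = p ::ₘ 0 from rfl, outc_cons, inc_cons]
      simp only [outc_zero, inc_zero]
      omega
  | p :: q :: T, p₀, pe, hch, h1, h2, v => by
      obtain rfl : p = p₀ := by simpa using h1
      replace hch := List.isChain_cons_cons.1 hch
      have h2' : (q :: T).getLast? = some pe := by
        rwa [getLast?_cons_ne (by simp)] at h2
      have ih := trail_balance (q :: T) q pe hch.2 rfl h2' v
      rw [← Multiset.cons_coe, outc_cons, inc_cons]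
      rw [← hch.1] at ih
      omega

lemma vlist_balance : ∀ (l : List V) {a b : V},
    l.head? = some a → l.getLast? = some b →
    ∀ v, outc (↑(pairs l)) v + (if v = b then 1 else 0)
        = inc (↑(pairs l)) v + (if v = a then 1 else 0)
  | [], a, b, h, _, _ => by simp at h
  | [c], a, b, h1, h2, v => by
      obtain rfl : c = a := by simpa using h1
      obtain rfl : c = b := by simpa using h2
      simp [pairs]
  | c :: d :: l, a, b, h1, h2, v => by
      obtain rfl : c = a := by simpa using h1
      have h2' : (d :: l).getLast? = some b := by
        rwa [getLast?_cons_ne (by simp)] at h2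
      have ih := vlist_balance (d :: l) rfl h2' v
      rw [pairs_cons₂, ← Multiset.cons_coe, outc_cons, inc_cons]
      simp only at ih ⊢
      omega

lemma exists_trail (F : Multiset (V × V)) (hnl : ∀ p ∈ F, p.1 ≠ p.2) (a : V)
    (ha : inc F a + 1 ≤ outc F a) :
    ∃ (b : V) (T : List (V × V)) (p₀ pe : V × V), T ≠ [] ∧ (↑T : Multiset (V × V)) ≤ F ∧
      T.Chain' (fun p q => p.2 = q.1) ∧ T.head? = some p₀ ∧ p₀.1 = a ∧
      T.getLast? = some pe ∧ outc F (pe.2) + 1 ≤ inc F (pe.2) := by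
  induction F using Multiset.strongInductionOn generalizing a with
  | _ F ihF =>
  have hne : F.filter (fun p => p.1 = a) ≠ 0 := by
    intro h0
    have : outc F a = 0 := by unfold outc; rw [h0]; rfl
    omega
  obtain ⟨p, hp⟩ := Multiset.exists_mem_of_ne_zero hne
  rw [Multiset.mem_filter] at hp
  obtain ⟨hpF, hpa⟩ := hp
  have hua : p.2 ≠ a := fun h => hnl p hpF (hpa.trans h.symm)
  set F' := F.erase p with hF'
  have hcons : p ::ₘ F' = F := Multiset.cons_erase hpF
  have houtF : ∀ v, outc F v = (if v = p.1 then 1 else 0) + outc F' v := by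
    intro v; rw [← hcons, outc_cons]
  have hincF : ∀ v, inc F v = (if v = p.2 then 1 else 0) + inc F' v := by
    intro v; rw [← hcons, inc_cons]
  by_cases hdef : outc F p.2 + 1 ≤ inc F p.2
  · refine ⟨p.2, [p], p, p, by simp, ?_, by simp [List.Chain'], rfl, hpa, rfl, hdef⟩
    rw [Multiset.coe_singleton]
    exact Multiset.singleton_le.2 hpF
  · push_neg at hdef
    have hu' : inc F' p.2 + 1 ≤ outc F' p.2 := by
      have e1 := houtF p.2
      have e2 := hincF p.2
      rw [if_neg (show ¬ p.2 = p.1 from fun h => hnl p hpF h.symm)] at e1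
      rw [if_pos rfl] at e2
      omega
    have hlt : F' < F := by
      rw [hF']; exact Multiset.erase_lt.2 hpF
    obtain ⟨b, T', p₀', pe', g1, g2, g3, g4, g5, g6, g8⟩ :=
      ihF F' hlt (fun q hq => hnl q (Multiset.mem_of_le (le_of_lt hlt) hq)) p.2 hu'
    have hba : pe'.2 ≠ a := by
      intro hba
      subst hba
      have e1 := houtF pe'.2
      have e2 := hincF pe'.2
      rw [if_pos hpa.symm] at e1
      rw [if_neg (fun h : pe'.2 = p.2 => hua h.symm)] at e2
      omega
    refine ⟨pe'.2, p :: T', p, pe', by simp, ?_, ?_, rfl, hpa, ?_, ?_⟩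
    · rw [← Multiset.cons_coe, ← hcons]
      exact Multiset.cons_le_cons p g2
    · refine List.isChain_cons.2 ?_
      refine ⟨?_, g3⟩
      intro y hy
      rw [g4] at hy
      obtain rfl : p₀' = y := by simpa using hy
      exact g5.symm
    · rwa [getLast?_cons_ne g1]
    · have e1 := houtF pe'.2
      have e2 := hincF pe'.2
      rw [if_neg (show ¬ pe'.2 = p.1 from fun h => hba (h.trans hpa))] at e1
      have h2a : inc F' pe'.2 ≤ inc F pe'.2 := by omega
      omega

lemma pairs_of_trail : ∀ (T : List (V × V)) (p₀ : V × V),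
    T.Chain' (fun p q => p.2 = q.1) → T.head? = some p₀ →
    pairs (p₀.1 :: T.map Prod.snd) = T
  | [], p₀, _, h => by simp at h
  | [p], p₀, _, h => by
      obtain rfl : p = p₀ := by simpa using h
      rfl
  | p :: q :: T, p₀, hch, h => by
      obtain rfl : p = p₀ := by simpa using h
      replace hch := List.isChain_cons_cons.1 hch
      have ih := pairs_of_trail (q :: T) q hch.2 rfl
      rw [← hch.1] at ih
      simp only [List.map_cons]
      rw [pairs_cons₂]
      rw [List.map_cons] at ih
      rw [ih]

variable {G : Multigraph V}

lemma adj_symm {a b : V} (h : G.Adj a b) : G.Adj b a :=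
  ⟨h.1.symm, by rw [Sym2.eq_swap]; exact h.2⟩

lemma mem_verts_of_adj_right {a b : V} (h : G.Adj a b) : b ∈ G.verts :=
  G.supp _ h.2 b (by rw [Sym2.mem_iff]; right; rfl)

lemma verts_of_chain : ∀ {l : List V} {a : V}, l.Chain' G.Adj →
    l.head? = some a → a ∈ G.verts → ∀ v ∈ l, v ∈ G.verts := by
  intro l
  induction l with
  | nil => intro a _ _ _ v hv; simp at hv
  | cons c t ih =>
      intro a hch ha hav v hv
      obtain rfl : c = a := by simpa using ha
      rcases List.mem_cons.1 hv with rfl | hv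
      · exact hav
      · cases t with
        | nil => simp at hv
        | cons d t' =>
            replace hch := List.isChain_cons_cons.1 hch
            exact ih hch.2 rfl (mem_verts_of_adj_right hch.1) v hv

lemma mk_pathBetween {a b : V} {l : List V} (h1 : l ≠ []) (h2 : l.Nodup)
    (h3 : l.Chain' G.Adj) (h4 : l.head? = some a) (h5 : l.getLast? = some b)
    (ha : a ∈ G.verts) : G.IsPathBetween a b l :=
  ⟨⟨h1, h2, verts_of_chain h3 h4 ha, h3⟩, h4, h5⟩

lemma path_of_trail {T : List (V × V)} {a : V} {p₀ pe : V × V}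
    (hne : T ≠ []) (hch : T.Chain' (fun p q => p.2 = q.1)) (hh : T.head? = some p₀)
    (h1 : p₀.1 = a) (hl : T.getLast? = some pe)
    (hadj : ∀ p ∈ T, G.Adj p.1 p.2) (ha : a ∈ G.verts) :
    ∃ l, G.IsPathBetween a pe.2 l ∧ listEdges l ⊆ T.map (fun p => s(p.1, p.2)) := by
  subst h1
  have hpairs : pairs (p₀.1 :: T.map Prod.snd) = T := pairs_of_trail T p₀ hch hh
  set W := p₀.1 :: T.map Prod.snd with hW
  have hWne : W ≠ [] := by simp [hW]
  have hWch : W.Chain' G.Adj := chain'_iff_pairs.2 (by rw [hW, hpairs]; exact hadj)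
  have hWh : W.head? = some p₀.1 := rfl
  have hWl : W.getLast? = some pe.2 := by
    rw [hW, getLast?_cons_ne (by simpa using hne), List.getLast?_map, hl]
    rfl
  obtain ⟨l, g1, g2, g3, g4, g5, g6, g7⟩ := dedup_chain W.length W le_rfl hWne hWch
  refine ⟨l, mk_pathBetween g1 g2 g3 (g4.trans hWh) (g5.trans hWl) ha, ?_⟩
  refine List.Subset.trans g7 ?_
  rw [listEdges_eq, hW, hpairs]
  exact fun e he => he

/-- The main lemma. -/
lemma main_lemma (hconn : G.Connected) {x z s₁ s₃ : V}
    (hx : x ∈ G.verts) (hz : z ∈ G.verts) (hs3 : s₃ ∈ G.verts)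
    (hxz : x ≠ z) (hxs1 : x ≠ s₁) (hxs3 : x ≠ s₃)
    (hzs1 : z ≠ s₁) (hzs3 : z ≠ s₃) (h13 : s₁ ≠ s₃)
    {P₁ P₃ : List V} (hP1 : G.IsPathBetween x s₁ P₁) (hP3 : G.IsPathBetween x s₃ P₃)
    (hd : (listEdges P₁).Disjoint (listEdges P₃)) :
    ∃ l₁ l₂ : List V, (listEdges l₁).Disjoint (listEdges l₂) ∧
      ((G.IsPathBetween x s₁ l₁ ∧ G.IsPathBetween z s₃ l₂) ∨
       (G.IsPathBetween x s₃ l₁ ∧ G.IsPathBetween z s₁ l₂)) := by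
  classical
  obtain ⟨⟨hP1ne, hP1nd, hP1v, hP1ch⟩, hP1h, hP1l⟩ := hP1
  obtain ⟨⟨hP3ne, hP3nd, hP3v, hP3ch⟩, hP3h, hP3l⟩ := hP3
  set Rstep : V → V → Prop := fun u v => G.Adj u v ∧ (u, v) ∉ pairs P₁ with hRstep
  by_cases hreach : Relation.ReflTransGen Rstep z s₃
  · -- residual path exists : construct the two paths
    obtain ⟨R, hRne, hRnd, hRch, hRh, hRl⟩ := path_of_reflTransGen hreach
    have hRadj : R.Chain' G.Adj := hRch.imp fun a b h => h.1
    set mdP : Multiset (V × V) := ↑(pairs P₁) with hmdP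
    set mdR : Multiset (V × V) := ↑(pairs R) with hmdR
    have hdPadj : ∀ p ∈ mdP, G.Adj p.1 p.2 := by
      intro p hp
      exact chain'_iff_pairs.1 hP1ch p (by rwa [hmdP, Multiset.mem_coe] at hp)
    have hdRstep : ∀ p ∈ mdR, Rstep p.1 p.2 := by
      intro p hp
      exact chain'_iff_pairs.1 hRch p (by rwa [hmdR, Multiset.mem_coe] at hp)
    set dirP : Multiset (V × V) := mdP.filter (fun p => (p.2, p.1) ∉ pairs R) with hdirP
    set CC : Multiset (V × V) := mdP.filter (fun p => ¬ (p.2, p.1) ∉ pairs R) with hCC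
    set dirR : Multiset (V × V) := mdR.filter (fun q => s(q.1, q.2) ∉ listEdges P₁) with hdirR
    set CC' : Multiset (V × V) := mdR.filter (fun q => ¬ s(q.1, q.2) ∉ listEdges P₁) with hCC'
    have hPsplit : dirP + CC = mdP := Multiset.filter_add_not _ _
    have hRsplit : dirR + CC' = mdR := Multiset.filter_add_not _ _
    set F : Multiset (V × V) := dirP + dirR with hF
    have hFadj : ∀ p ∈ F, G.Adj p.1 p.2 := by
      intro p hp
      rcases Multiset.mem_add.1 hp with hp | hp
      · exact hdPadj p (Multiset.mem_of_mem_filter hp)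
      · exact (hdRstep p (Multiset.mem_of_mem_filter hp)).1
    have hFnl : ∀ p ∈ F, p.1 ≠ p.2 := fun p hp => (hFadj p hp).1
    have hFnodup : F.Nodup := by
      rw [hF, Multiset.nodup_add]
      refine ⟨Multiset.Nodup.filter _ ?_, Multiset.Nodup.filter _ ?_, ?_⟩
      · rw [hmdP, Multiset.coe_nodup]; exact pairs_nodup hP1nd
      · rw [hmdR, Multiset.coe_nodup]; exact pairs_nodup hRnd
      · rw [Multiset.disjoint_left]
        intro p hp1 hp2
        have h1 : p ∈ pairs P₁ := by
          have := Multiset.mem_of_mem_filter hp1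
          rwa [hmdP, Multiset.mem_coe] at this
        have h2 := hdRstep p (Multiset.mem_of_mem_filter hp2)
        exact h2.2 h1
    have hsym2 : ∀ p ∈ F, ∀ q ∈ F, s(p.1, p.2) = s(q.1, q.2) → p = q := by
      intro p hp q hq he
      have memP : ∀ r ∈ dirP, r ∈ pairs P₁ := fun r hr => by
        have := Multiset.mem_of_mem_filter hr; rwa [hmdP, Multiset.mem_coe] at this
      have memR : ∀ r ∈ dirR, r ∈ pairs R := fun r hr => by
        have := Multiset.mem_of_mem_filter hr; rwa [hmdR, Multiset.mem_coe] at this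
      rcases Multiset.mem_add.1 hp with hp | hp <;> rcases Multiset.mem_add.1 hq with hq | hq
      · exact pairs_sym2_inj hP1nd (memP p hp) (memP q hq) he
      · exfalso
        have hqfilter := (Multiset.mem_filter.1 hq).2
        exact hqfilter (by
          rw [← he, listEdges_eq]
          exact List.mem_map.2 ⟨p, memP p hp, rfl⟩)
      · exfalso
        have hpfilter := (Multiset.mem_filter.1 hp).2
        exact hpfilter (by
          rw [he, listEdges_eq]
          exact List.mem_map.2 ⟨q, memP q hq, rfl⟩)
      · exact pairs_sym2_inj hRnd (memR p hp) (memR q hq) he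
    -- CC' = CC.map swap
    have hCCswap : CC' = CC.map (fun p : V × V => (p.2, p.1)) := by
      have hCCnodup : CC.Nodup := Multiset.Nodup.filter _ (by
        rw [hmdP, Multiset.coe_nodup]; exact pairs_nodup hP1nd)
      refine (Multiset.Nodup.ext ?_ ?_).2 ?_
      · exact Multiset.Nodup.filter _ (by rw [hmdR, Multiset.coe_nodup]; exact pairs_nodup hRnd)
      · exact hCCnodup.map (fun p q h => by
          have h1 := congrArg Prod.fst h
          have h2 := congrArg Prod.snd h
          exact Prod.ext h2 h1)
      · intro q
        rw [Multiset.mem_map]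
        constructor
        · intro hq
          obtain ⟨hq1, hq2⟩ := Multiset.mem_filter.1 hq
          push_neg at hq2
          have hqR : q ∈ pairs R := by rwa [hmdR, Multiset.mem_coe] at hq1
          have hqnP : q ∉ pairs P₁ := (chain'_iff_pairs.1 hRch q hqR).2
          have : ∃ p ∈ pairs P₁, s(p.1, p.2) = s(q.1, q.2) := by
            rw [listEdges_eq] at hq2
            obtain ⟨p, hp, hpe⟩ := List.mem_map.1 hq2
            exact ⟨p, hp, hpe⟩
          obtain ⟨p, hpP, hpe⟩ := this
          rcases Sym2.eq_iff.1 hpe with ⟨e1, e2⟩ | ⟨e1, e2⟩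
          · exact absurd (show q ∈ pairs P₁ from (Prod.ext e1 e2 : p = q) ▸ hpP) hqnP
          · have hpq : (p.2, p.1) = q := Prod.ext e2 e1
            refine ⟨p, ?_, hpq⟩
            rw [hCC, Multiset.mem_filter]
            refine ⟨by rw [hmdP, Multiset.mem_coe]; exact hpP, ?_⟩
            push_neg
            rw [hpq]
            exact hqR
        · rintro ⟨p, hpC, rfl⟩
          obtain ⟨hp1, hp2⟩ := Multiset.mem_filter.1 hpC
          push_neg at hp2
          rw [hCC', Multiset.mem_filter]
          constructor
          · rw [hmdR, Multiset.mem_coe]; exact hp2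
          · push_neg
            rw [listEdges_eq]
            refine List.mem_map.2 ⟨p, by rwa [hmdP, Multiset.mem_coe] at hp1, ?_⟩
            simp [Sym2.eq_swap]
    -- degree bookkeeping
    have hbalP := vlist_balance P₁ hP1h hP1l
    have hbalR := vlist_balance R hRh hRl
    have hMASTER : ∀ v, outc F v + (if v = s₁ then 1 else 0) + (if v = s₃ then 1 else 0)
        = inc F v + (if v = x then 1 else 0) + (if v = z then 1 else 0) := by
      intro v
      have e1 : outc mdP v = outc dirP v + outc CC v := by rw [← hPsplit, outc_add]
      have e2 : inc mdP v = inc dirP v + inc CC v := by rw [← hPsplit, inc_add]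
      have e3 : outc mdR v = outc dirR v + outc CC' v := by rw [← hRsplit, outc_add]
      have e4 : inc mdR v = inc dirR v + inc CC' v := by rw [← hRsplit, inc_add]
      have e5 : outc F v = outc dirP v + outc dirR v := outc_add _ _ v
      have e6 : inc F v = inc dirP v + inc dirR v := inc_add _ _ v
      have e7 : outc CC' v = inc CC v := by rw [hCCswap, outc_map_swap]
      have e8 : inc CC' v = outc CC v := by rw [hCCswap, inc_map_swap]
      have b1 := hbalP v
      have b2 := hbalR v
      rw [← hmdP] at b1
      rw [← hmdR] at b2
      omega
    have hxbal : inc F x + 1 ≤ outc F x := by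
      have := hMASTER x
      rw [if_neg hxs1, if_neg hxs3, if_pos rfl, if_neg hxz] at this
      omega
    obtain ⟨-, T₁, p₀, pe, hT1ne, hT1le, hT1ch, hT1h, hT1h1, hT1l, hT1def⟩ :=
      exists_trail F hFnl x hxbal
    have hbor : pe.2 = s₁ ∨ pe.2 = s₃ := by
      by_cases h1 : pe.2 = s₁
      · exact .inl h1
      by_cases h3 : pe.2 = s₃
      · exact .inr h3
      exfalso
      have := hMASTER pe.2
      rw [if_neg h1, if_neg h3] at this
      omega
    obtain ⟨c, hbc⟩ : ∃ c, (pe.2 = s₁ ∧ c = s₃) ∨ (pe.2 = s₃ ∧ c = s₁) := by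
      rcases hbor with h | h
      · exact ⟨s₃, .inl ⟨h, rfl⟩⟩
      · exact ⟨s₁, .inr ⟨h, rfl⟩⟩
    have hzc : z ≠ c := by
      rcases hbc with ⟨_, rfl⟩ | ⟨_, rfl⟩
      · exact hzs3
      · exact hzs1
    have hM2pre : ∀ v, outc F v + (if v = pe.2 then 1 else 0) + (if v = c then 1 else 0)
        = inc F v + (if v = x then 1 else 0) + (if v = z then 1 else 0) := by
      intro v
      have := hMASTER v
      rcases hbc with ⟨h1, h2⟩ | ⟨h1, h2⟩ <;> rw [h1, h2] <;> omega
    set F₂ : Multiset (V × V) := F - ↑T₁ with hF₂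
    have hT1bal := trail_balance T₁ p₀ pe hT1ch hT1h hT1l
    have hM2 : ∀ v, outc F₂ v + (if v = c then 1 else 0)
        = inc F₂ v + (if v = z then 1 else 0) := by
      intro v
      have e1 : outc F₂ v = outc F v - outc (↑T₁) v := outc_sub hT1le v
      have e2 : inc F₂ v = inc F v - inc (↑T₁) v := inc_sub hT1le v
      have e3 := outc_le hT1le v
      have e4 := inc_le hT1le v
      have e5 := hT1bal v
      rw [hT1h1] at e5
      have e6 := hM2pre v
      omega
    have hzbal : inc F₂ z + 1 ≤ outc F₂ z := by
      have := hM2 z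
      rw [if_neg hzc, if_pos rfl] at this
      omega
    have hsubF : F₂ ≤ F := by rw [hF₂]; exact Multiset.sub_le_self _ _
    have hF₂nl : ∀ p ∈ F₂, p.1 ≠ p.2 := fun p hp => hFnl p (Multiset.mem_of_le hsubF hp)
    obtain ⟨-, T₂, q₀, qe, hT2ne, hT2le, hT2ch, hT2h, hT2h1, hT2l, hT2def⟩ :=
      exists_trail F₂ hF₂nl z hzbal
    have hT2end : qe.2 = c := by
      by_contra hne2
      have := hM2 qe.2
      rw [if_neg hne2] at this
      omega
    have hT1F : ∀ p ∈ T₁, p ∈ F := fun p hp =>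
      Multiset.mem_of_le hT1le (Multiset.mem_coe.2 hp)
    have hT2F₂ : ∀ p ∈ T₂, p ∈ F₂ := fun p hp =>
      Multiset.mem_of_le hT2le (Multiset.mem_coe.2 hp)
    have hT2F : ∀ p ∈ T₂, p ∈ F := fun p hp => Multiset.mem_of_le hsubF (hT2F₂ p hp)
    obtain ⟨l₁, hl₁, hl₁e⟩ :=
      path_of_trail hT1ne hT1ch hT1h hT1h1 hT1l (fun p hp => hFadj p (hT1F p hp)) hx
    obtain ⟨l₂, hl₂, hl₂e⟩ :=
      path_of_trail hT2ne hT2ch hT2h hT2h1 hT2l (fun p hp => hFadj p (hT2F p hp)) hz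
    have hdis : (listEdges l₁).Disjoint (listEdges l₂) := by
      intro e he1 he2
      obtain ⟨p, hpT, hpe⟩ := List.mem_map.1 (hl₁e he1)
      obtain ⟨q, hqT, hqe⟩ := List.mem_map.1 (hl₂e he2)
      have hpF := hT1F p hpT
      have hqF := hT2F q hqT
      have hpq : p = q := hsym2 p hpF q hqF (hpe.trans hqe.symm)
      have hcount : Multiset.count q (↑T₂ : Multiset (V × V)) ≤ Multiset.count q F₂ :=
        Multiset.le_iff_count.1 hT2le q
      have hsub : Multiset.count q F₂ = Multiset.count q F - Multiset.count q (↑T₁) := by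
        rw [hF₂, Multiset.count_sub]
      have h1 : 1 ≤ Multiset.count q (↑T₂ : Multiset (V × V)) :=
        Multiset.one_le_count_iff_mem.2 (Multiset.mem_coe.2 hqT)
      have h2 : 1 ≤ Multiset.count q (↑T₁ : Multiset (V × V)) :=
        Multiset.one_le_count_iff_mem.2 (Multiset.mem_coe.2 (hpq ▸ hpT))
      have h3 : Multiset.count q F ≤ 1 := Multiset.nodup_iff_count_le_one.1 hFnodup q
      omega
    refine ⟨l₁, l₂, hdis, ?_⟩
    rcases hbc with ⟨h1, h2⟩ | ⟨h1, h2⟩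
    · left
      refine ⟨h1 ▸ hl₁, ?_⟩
      rw [hT2end, h2] at hl₂
      exact hl₂
    · right
      refine ⟨h1 ▸ hl₁, ?_⟩
      rw [hT2end, h2] at hl₂
      exact hl₂
  · -- no residual path : contradiction
    exfalso
    have hwalk := hconn.2 z hz s₃ hs3
    obtain ⟨u, v, hu, hv, huv⟩ :=
      crossing (A := fun v => Relation.ReflTransGen Rstep z v) hwalk
        Relation.ReflTransGen.refl hreach
    have hmem : (u, v) ∈ pairs P₁ := by
      by_contra hnp
      exact hv (hu.tail ⟨huv, hnp⟩)
    have hux := revwalk P₁ (mem_pairs_fst hmem).1 hP1h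
    have hxA : Relation.ReflTransGen Rstep z x := by
      refine hu.trans (Relation.ReflTransGen.mono ?_ _ _ hux)
      intro c d hcd
      refine ⟨adj_symm (chain'_iff_pairs.1 hP1ch _ hcd), ?_⟩
      exact fun hmem' => swap_not_mem_pairs hP1nd hcd hmem'
    have hwalk3 := fwdwalk P₃ hP3ch hP3h hP3l
    obtain ⟨u', v', hu', hv', huv'⟩ :=
      crossing (A := fun v => Relation.ReflTransGen Rstep z v) hwalk3 hxA hreach
    have hmem' : (u', v') ∈ pairs P₁ := by
      by_contra hnp
      exact hv' (hu'.tail ⟨huv'.1, hnp⟩)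
    refine hd (a := s(u', v')) ?_ ?_
    · rw [listEdges_eq]; exact List.mem_map.2 ⟨(u', v'), hmem', rfl⟩
    · rw [listEdges_eq]; exact List.mem_map.2 ⟨(u', v'), huv'.2, rfl⟩

end EDPaux

/-- **Edge-disjoint path pairs to two target vertices in 3-connected graphs**
(Remark 4.12, claims (1) and (2)).
If `G` is a finite connected simple graph 3-connected to the distinct vertices
`s₁, s₂, s₃`, then (1) any two distinct vertices `x, y` outside `{s₁, s₂, s₃}` admit
two edge-disjoint paths, starting at `x` and `y` respectively, one ending at `s₁`
and the other at `s₃`; and (2) the same holds for paths starting at any `x ≠ s₂`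
and at `s₂`. -/
theorem edge_disjoint_path_pairs
    {V : Type} (G : Multigraph V) (s₁ s₂ s₃ : V)
    (h12 : s₁ ≠ s₂) (h13 : s₁ ≠ s₃) (h23 : s₂ ≠ s₃)
    (hs₁ : s₁ ∈ G.verts) (hs₂ : s₂ ∈ G.verts) (hs₃ : s₃ ∈ G.verts)
    (hsimple : G.IsSimple) (hconn : G.Connected)
    (h3c : G.ThreeConnTo s₁ s₂ s₃) :
    -- (1)
    (∀ x y : V, x ∈ G.verts → y ∈ G.verts → x ≠ y →
      x ≠ s₁ → x ≠ s₂ → x ≠ s₃ → y ≠ s₁ → y ≠ s₂ → y ≠ s₃ →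
      ∃ l₁ l₂ : List V, (listEdges l₁).Disjoint (listEdges l₂) ∧
        ((G.IsPathBetween x s₁ l₁ ∧ G.IsPathBetween y s₃ l₂) ∨
         (G.IsPathBetween x s₃ l₁ ∧ G.IsPathBetween y s₁ l₂))) ∧
    -- (2)
    (∀ x : V, x ∈ G.verts → x ≠ s₂ →
      ∃ l₁ l₂ : List V, (listEdges l₁).Disjoint (listEdges l₂) ∧
        ((G.IsPathBetween x s₁ l₁ ∧ G.IsPathBetween s₂ s₃ l₂) ∨
         (G.IsPathBetween x s₃ l₁ ∧ G.IsPathBetween s₂ s₁ l₂))) := by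
  constructor
  · intro x y hxv hyv hxy hxs1 hxs2 hxs3 hys1 hys2 hys3
    obtain ⟨P₁, P₂, P₃, hP1, hP2, hP3, h12d, h13d, h23d⟩ := h3c x hxv hxs1 hxs2 hxs3
    exact EDPaux.main_lemma hconn hxv hyv hs₃ hxy hxs1 hxs3 hys1 hys3 h13 hP1 hP3 h13d
  · intro x hxv hxs2
    by_cases hx1 : x = s₁
    · subst hx1
      obtain ⟨l, h1, h2, h3, h4, h5⟩ := EDPaux.path_of_reflTransGen (hconn.2 s₂ hs₂ s₃ hs₃)
      refine ⟨[x], l, ?_, .inl ⟨?_, EDPaux.mk_pathBetween h1 h2 h3 h4 h5 hs₂⟩⟩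
      · intro e he; simp [listEdges] at he
      · exact ⟨⟨by simp, by simp, by simpa using hxv, by simp [List.Chain']⟩, rfl, by simp⟩
    by_cases hx3 : x = s₃
    · subst hx3
      obtain ⟨l, h1, h2, h3, h4, h5⟩ := EDPaux.path_of_reflTransGen (hconn.2 s₂ hs₂ s₁ hs₁)
      refine ⟨[x], l, ?_, .inr ⟨?_, EDPaux.mk_pathBetween h1 h2 h3 h4 h5 hs₂⟩⟩
      · intro e he; simp [listEdges] at he
      · exact ⟨⟨by simp, by simp, by simpa using hxv, by simp [List.Chain']⟩, rfl, by simp⟩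
    obtain ⟨P₁, P₂, P₃, hP1, hP2, hP3, h12d, h13d, h23d⟩ := h3c x hxv hx1 hxs2 hx3
    exact EDPaux.main_lemma hconn hxv hs₂ hs₃ hxs2 hx1 hx3 h12.symm h23 h13 hP1 hP3 h13d
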